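/- Consider the logistic loss f(θ) = (1/n)·Σᵢ ln(1 + exp(−yᵢ·⟨xᵢ, θ⟩)) with xᵢ ∈ ℝᵈ, yᵢ ∈ {−1, 1}. Then for all θ, ‖∇²f(θ)‖_{p→q} ≤ (maxᵢ ‖xᵢ‖_q²)·f(θ), where 1/p + 1/q = 1. -/

import Mathlib

open scoped BigOperators

noncomputable def lpNorm (p : ENNReal) {ι : Type*} [Fintype ι] (x : ι → ℝ) : ℝ :=
  ‖(WithLp.equiv p (ι → ℝ)).symm x‖

noncomputable def opNorm (p q : ENNReal) {ι κ : Type*} [Fintype ι] [Fintype κ]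
    (A : Matrix ι κ ℝ) : ℝ :=
  sSup {c | ∃ x : κ → ℝ, lpNorm p x ≤ 1 ∧ c = lpNorm q (A.mulVec x)}

noncomputable def dotCLM {n : ℕ} (v : Fin n → ℝ) : (Fin n → ℝ) →L[ℝ] ℝ :=
  LinearMap.toContinuousLinearMap (∑ i, v i • (LinearMap.proj i : (Fin n → ℝ) →ₗ[ℝ] ℝ))

noncomputable def mulVecCLM {m n : ℕ} (M : Matrix (Fin m) (Fin n) ℝ) :
    (Fin n → ℝ) →L[ℝ] (Fin m → ℝ) :=
  LinearMap.toContinuousLinearMap M.mulVecLin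

lemma lpNorm_nonneg (p : ENNReal) (hp : 1 ≤ p) {ι : Type*} [Fintype ι] (x : ι → ℝ) :
    0 ≤ lpNorm p x := by
  haveI : Fact (1 ≤ p) := ⟨hp⟩
  simpa [lpNorm] using norm_nonneg ((WithLp.equiv p (ι → ℝ)).symm x)

lemma lpNorm_top (d : ℕ) (x : Fin d → ℝ) : lpNorm ⊤ x = ⨆ j, |x j| := by
  simp [lpNorm, PiLp.norm_eq_ciSup, Real.norm_eq_abs]

lemma lpNorm_finite (q : ENNReal) (hq : q ≠ ⊤) (hq1 : 1 ≤ q) (d : ℕ) (x : Fin d → ℝ) :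
    lpNorm q x = (∑ j, |x j| ^ q.toReal) ^ (1 / q.toReal) := by
  have hq0 : q ≠ 0 := by rintro rfl; simp at hq1
  have h0 : 0 < q.toReal := ENNReal.toReal_pos hq0 hq
  rw [lpNorm, PiLp.norm_eq_sum h0]
  simp [Real.norm_eq_abs]

lemma abs_le_lpNorm_top (d : ℕ) (x : Fin d → ℝ) (j : Fin d) : |x j| ≤ lpNorm ⊤ x := by
  rw [lpNorm_top]
  exact le_ciSup (f := fun j => |x j|) (Set.Finite.bddAbove (Set.finite_range _)) j

lemma holder {d : ℕ} (p q : ENNReal) (hp : 1 ≤ p) (hq : 1 ≤ q) (hpq : 1/p + 1/q = 1)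
    (a b : Fin d → ℝ) : |∑ j, a j * b j| ≤ lpNorm q a * lpNorm p b := by
  have key : ∀ (r s : ENNReal), 1 ≤ r → 1 ≤ s → 1/r + 1/s = 1 →
      ∀ (a b : Fin d → ℝ), ∑ j, |a j| * |b j| ≤ lpNorm s a * lpNorm r b := by
    intro r s hr hs hrs a b
    rcases eq_or_ne r ⊤ with hrt | hrt
    · -- r = ⊤, so s = 1
      have hs1 : s = 1 := by
        rw [hrt] at hrs
        simpa using hrs
      subst hs1 hrt
      rw [lpNorm_finite 1 (by simp) le_rfl]
      simp only [ENNReal.toReal_one, Real.rpow_one, div_one]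
      calc ∑ j, |a j| * |b j| ≤ ∑ j, |a j| * lpNorm ⊤ b := by
            apply Finset.sum_le_sum
            intro j _
            exact mul_le_mul_of_nonneg_left (abs_le_lpNorm_top d b j) (abs_nonneg _)
        _ = (∑ j, |a j|) * lpNorm ⊤ b := by rw [Finset.sum_mul]
    · rcases eq_or_ne s ⊤ with hst | hst
      · -- s = ⊤, r = 1
        have hr1 : r = 1 := by
          rw [hst] at hrs
          simpa using hrs
        subst hr1 hst
        rw [lpNorm_finite 1 (by simp) le_rfl]
        simp only [ENNReal.toReal_one, Real.rpow_one, div_one]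
        calc ∑ j, |a j| * |b j| ≤ ∑ j, lpNorm ⊤ a * |b j| := by
              apply Finset.sum_le_sum
              intro j _
              exact mul_le_mul_of_nonneg_right (abs_le_lpNorm_top d a j) (abs_nonneg _)
          _ = lpNorm ⊤ a * ∑ j, |b j| := by rw [Finset.mul_sum]
      · -- both finite
        have hr0 : r ≠ 0 := by rintro rfl; simp at hr
        have hs0 : s ≠ 0 := by rintro rfl; simp at hs
        have hrr : 0 < r.toReal := ENNReal.toReal_pos hr0 hrt
        have hsr : 0 < s.toReal := ENNReal.toReal_pos hs0 hst
        have hsum : r.toReal⁻¹ + s.toReal⁻¹ = 1 := by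
          have h3 : ((1:ENNReal)/r).toReal + ((1:ENNReal)/s).toReal = 1 := by
            rw [← ENNReal.toReal_add (by simp [hr0]) (by simp [hs0]), hrs, ENNReal.toReal_one]
          rw [one_div, one_div, ENNReal.toReal_inv, ENNReal.toReal_inv] at h3
          exact h3
        have hconj : r.toReal.HolderConjugate s.toReal :=
          ⟨by rw [inv_one]; exact hsum, hrr, hsr⟩
        calc ∑ j, |a j| * |b j|
            ≤ (∑ j, |a j| ^ s.toReal) ^ (1/s.toReal) * (∑ j, |b j| ^ r.toReal) ^ (1/r.toReal) := by
              have := Real.inner_le_Lp_mul_Lq (Finset.univ)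
                (fun j => |a j|) (fun j => |b j|) hconj.symm
              simpa [abs_abs] using this
          _ = lpNorm s a * lpNorm r b := by
              rw [lpNorm_finite s hst hs, lpNorm_finite r hrt hr]
  calc |∑ j, a j * b j| ≤ ∑ j, |a j * b j| := Finset.abs_sum_le_sum_abs _ _
    _ = ∑ j, |a j| * |b j| := by simp [abs_mul]
    _ ≤ lpNorm q a * lpNorm p b := key p q hp hq hpq a b

lemma dotCLM_apply {m : ℕ} (v z : Fin m → ℝ) : dotCLM v z = ∑ i, v i * z i := by
  simp [dotCLM]

lemma dotCLM_single {m : ℕ} (v : Fin m → ℝ) (j : Fin m) :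
    dotCLM v (Pi.single j 1) = v j := by
  rw [dotCLM_apply]
  rw [Finset.sum_eq_single j] <;> simp +contextual [Pi.single_apply]

lemma mulVecCLM_apply {m k : ℕ} (M : Matrix (Fin m) (Fin k) ℝ) (z : Fin k → ℝ) :
    mulVecCLM M z = M.mulVec z := by
  simp [mulVecCLM]

lemma hasFDerivAt_dot {d : ℕ} (w : Fin d → ℝ) (θ : Fin d → ℝ) :
    HasFDerivAt (fun θ : Fin d → ℝ => ∑ j, w j * θ j) (dotCLM w) θ := by
  have h : (fun θ : Fin d → ℝ => ∑ j, w j * θ j) = ⇑(dotCLM w) := by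
    funext z; rw [dotCLM_apply]
  rw [h]
  exact (dotCLM w).hasFDerivAt

section
variable {n d : ℕ} (w : Fin n → Fin d → ℝ) (θ : Fin d → ℝ)

lemma hasDerivAt_lg (t : ℝ) :
    HasDerivAt (fun t => Real.log (1 + Real.exp t)) (Real.exp t / (1 + Real.exp t)) t := by
  have h : HasDerivAt (fun t => 1 + Real.exp t) (Real.exp t) t :=
    (Real.hasDerivAt_exp t).const_add 1
  exact h.log (by positivity)

lemma hasDerivAt_lg' (t : ℝ) :
    HasDerivAt (fun t => Real.exp t / (1 + Real.exp t))
      (Real.exp t / (1 + Real.exp t) ^ 2) t := by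
  have h1 : HasDerivAt (fun t => 1 + Real.exp t) (Real.exp t) t :=
    (Real.hasDerivAt_exp t).const_add 1
  have hne : (1 + Real.exp t) ≠ 0 := by positivity
  have := (Real.hasDerivAt_exp t).div h1 hne
  refine this.congr_deriv ?_
  ring

lemma logistic_grad :
    HasFDerivAt (fun θ : Fin d → ℝ =>
        (1/(n:ℝ)) * ∑ i, Real.log (1 + Real.exp (∑ j, w i j * θ j)))
      (dotCLM (fun j => (1/(n:ℝ)) * ∑ i,
        Real.exp (∑ k, w i k * θ k) / (1 + Real.exp (∑ k, w i k * θ k)) * w i j)) θ := by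
  have h1 : ∀ i : Fin n, HasFDerivAt
      (fun θ : Fin d → ℝ => Real.log (1 + Real.exp (∑ j, w i j * θ j)))
      ((Real.exp (∑ k, w i k * θ k) / (1 + Real.exp (∑ k, w i k * θ k))) • dotCLM (w i)) θ :=
    fun i => (hasDerivAt_lg _).comp_hasFDerivAt θ (hasFDerivAt_dot (w i) θ)
  have h2 := (HasFDerivAt.sum (fun i (_ : i ∈ Finset.univ) => h1 i)).const_mul (1/(n:ℝ))
  refine HasFDerivAt.congr_fderiv (h2.congr_of_eventuallyEq
    (Filter.Eventually.of_forall fun z => by simp [Finset.sum_apply])) ?_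
  ext z
  simp only [dotCLM_apply, ContinuousLinearMap.smul_apply, ContinuousLinearMap.coe_sum',
    Finset.sum_apply, smul_eq_mul, Finset.mul_sum]
  rw [Finset.sum_comm]
  apply Finset.sum_congr rfl
  intro i _
  rw [Finset.sum_mul]
  apply Finset.sum_congr rfl
  intro j _
  ring

lemma logistic_hess :
    HasFDerivAt (fun θ : Fin d → ℝ => fun j =>
        (1/(n:ℝ)) * ∑ i,
          Real.exp (∑ k, w i k * θ k) / (1 + Real.exp (∑ k, w i k * θ k)) * w i j)
      (mulVecCLM (Matrix.of fun j k => (1/(n:ℝ)) * ∑ i,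
        Real.exp (∑ l, w i l * θ l) / (1 + Real.exp (∑ l, w i l * θ l)) ^ 2
          * (w i j * w i k))) θ := by
  apply hasFDerivAt_pi''
  intro j
  have h1 : ∀ i : Fin n, HasFDerivAt
      (fun θ : Fin d → ℝ =>
        Real.exp (∑ k, w i k * θ k) / (1 + Real.exp (∑ k, w i k * θ k)) * w i j)
      ((w i j) • ((Real.exp (∑ k, w i k * θ k) / (1 + Real.exp (∑ k, w i k * θ k)) ^ 2)
        • dotCLM (w i))) θ := by
    intro i
    exact ((hasDerivAt_lg' _).comp_hasFDerivAt θ (hasFDerivAt_dot (w i) θ)).mul_const (w i j)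
  have h2 := (HasFDerivAt.sum (fun i (_ : i ∈ Finset.univ) => h1 i)).const_mul (1/(n:ℝ))
  refine HasFDerivAt.congr_fderiv (h2.congr_of_eventuallyEq
    (Filter.Eventually.of_forall fun z => by simp [Finset.sum_apply])) ?_
  ext z
  simp only [ContinuousLinearMap.coe_comp', Function.comp_apply, mulVecCLM_apply,
    ContinuousLinearMap.proj_apply, ContinuousLinearMap.smul_apply,
    ContinuousLinearMap.coe_sum', Finset.sum_apply, smul_eq_mul, dotCLM_apply,
    Matrix.mulVec, dotProduct, Matrix.of_apply, Finset.sum_mul, Finset.mul_sum]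
  rw [Finset.sum_comm]
  apply Finset.sum_congr rfl
  intro i _
  apply Finset.sum_congr rfl
  intro k _
  ring

end

lemma lpNorm_smul (q : ENNReal) (hq : 1 ≤ q) {d : ℕ} (c : ℝ) (u : Fin d → ℝ) :
    lpNorm q (c • u) = |c| * lpNorm q u := by
  haveI : Fact (1 ≤ q) := ⟨hq⟩
  have h : (WithLp.equiv q (Fin d → ℝ)).symm (c • u)
      = c • (WithLp.equiv q (Fin d → ℝ)).symm u := rfl
  rw [lpNorm, h, norm_smul, Real.norm_eq_abs, lpNorm]

lemma lpNorm_sum_smul_le (q : ENNReal) (hq : 1 ≤ q) {d m : ℕ}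
    (c : Fin m → ℝ) (u : Fin m → Fin d → ℝ) :
    lpNorm q (∑ i, c i • u i) ≤ ∑ i, |c i| * lpNorm q (u i) := by
  haveI : Fact (1 ≤ q) := ⟨hq⟩
  have h : (WithLp.equiv q (Fin d → ℝ)).symm (∑ i, c i • u i)
      = ∑ i, c i • (WithLp.equiv q (Fin d → ℝ)).symm (u i) := by simp
  rw [lpNorm, h]
  refine (norm_sum_le _ _).trans ?_
  apply Finset.sum_le_sum
  intro i _
  rw [norm_smul, Real.norm_eq_abs]
  exact le_of_eq rfl

lemma lg''_nonneg (t : ℝ) : 0 ≤ Real.exp t / (1 + Real.exp t) ^ 2 := by positivity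

lemma lg_nonneg (t : ℝ) : 0 ≤ Real.log (1 + Real.exp t) :=
  Real.log_nonneg (by nlinarith [Real.exp_pos t])

lemma lg''_le_lg (t : ℝ) :
    Real.exp t / (1 + Real.exp t) ^ 2 ≤ Real.log (1 + Real.exp t) := by
  have hs : 0 < Real.exp t := Real.exp_pos t
  have hpos : (0:ℝ) < 1 + Real.exp t := by positivity
  have h1 : Real.exp t / (1 + Real.exp t) ^ 2 ≤ Real.exp t / (1 + Real.exp t) := by
    apply div_le_div_of_nonneg_left hs.le hpos
    nlinarith
  have h2 : Real.exp t / (1 + Real.exp t) ≤ Real.log (1 + Real.exp t) := by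
    have := Real.log_le_sub_one_of_pos (x := (1 + Real.exp t)⁻¹) (by positivity)
    rw [Real.log_inv] at this
    have h3 : Real.exp t / (1 + Real.exp t) = 1 - (1 + Real.exp t)⁻¹ := by field_simp; ring
    linarith
  linarith

/-- Logistic loss: Hessian bound ‖∇²f‖ ≤ (maxᵢ ‖xᵢ‖_q²) f. -/
theorem stmt10 {n d : ℕ} (hn : 0 < n) (p q : ENNReal) (hp : 1 ≤ p) (hq : 1 ≤ q)
    (hpq : 1/p + 1/q = 1)
    (x : Fin n → Fin d → ℝ) (y : Fin n → ℝ) (hy : ∀ i, y i = 1 ∨ y i = -1)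
    (f : (Fin d → ℝ) → ℝ)
    (hf : ∀ θ, f θ = (1 / (n : ℝ)) *
      ∑ i, Real.log (1 + Real.exp (-(y i) * ∑ j, x i j * θ j)))
    (g : (Fin d → ℝ) → (Fin d → ℝ))
    (Hess : (Fin d → ℝ) → Matrix (Fin d) (Fin d) ℝ)
    (hgrad : ∀ θ, HasFDerivAt f (dotCLM (g θ)) θ)
    (hhess : ∀ θ, HasFDerivAt g (mulVecCLM (Hess θ)) θ) :
    ∀ θ, opNorm p q (Hess θ) ≤ (⨆ i, (lpNorm q (x i)) ^ 2) * f θ := by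
  intro θ₀
  set w : Fin n → Fin d → ℝ := fun i j => -(y i) * x i j with hw
  have hf' : ∀ θ, f θ = (1/(n:ℝ)) *
      ∑ i, Real.log (1 + Real.exp (∑ j, w i j * θ j)) := by
    intro θ
    rw [hf]
    congr 1
    apply Finset.sum_congr rfl
    intro i _
    have h : -(y i) * ∑ j, x i j * θ j = ∑ j, w i j * θ j := by
      rw [Finset.mul_sum]
      exact Finset.sum_congr rfl fun j _ => by simp only [hw]; ring
    rw [h]
  have hfe : f = fun θ => (1/(n:ℝ)) *
      ∑ i, Real.log (1 + Real.exp (∑ j, w i j * θ j)) := funext hf'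
  -- identify the gradient
  have hgG : g = fun θ => fun j => (1/(n:ℝ)) * ∑ i,
      Real.exp (∑ k, w i k * θ k) / (1 + Real.exp (∑ k, w i k * θ k)) * w i j := by
    funext θ j
    have h1 := hgrad θ
    rw [hfe] at h1
    have h2 := logistic_grad w θ
    have h3 := h1.unique h2
    have h4 := congrArg (fun (L : (Fin d → ℝ) →L[ℝ] ℝ) => L (Pi.single j 1)) h3
    simpa only [dotCLM_single] using h4
  -- identify the Hessian
  have hH : Hess θ₀ = Matrix.of (fun j k => (1/(n:ℝ)) * ∑ i,
      Real.exp (∑ l, w i l * θ₀ l) / (1 + Real.exp (∑ l, w i l * θ₀ l)) ^ 2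
        * (w i j * w i k)) := by
    have h1 := hhess θ₀
    rw [hgG] at h1
    have h2 := logistic_hess w θ₀
    have h3 := h1.unique h2
    ext j k
    have h4 := congrArg
      (fun (L : (Fin d → ℝ) →L[ℝ] (Fin d → ℝ)) => L (Pi.single k 1) j) h3
    simp only [mulVecCLM_apply] at h4
    simpa [Matrix.mulVec, dotProduct, Pi.single_apply, mul_ite,
      Finset.sum_ite_eq'] using h4
  rw [hH]
  set M := ⨆ i, (lpNorm q (x i)) ^ 2 with hM
  have hM_nonneg : 0 ≤ M := Real.iSup_nonneg fun i => sq_nonneg _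
  have hf_nonneg : 0 ≤ f θ₀ := by
    rw [hf' θ₀]
    apply mul_nonneg (by positivity)
    exact Finset.sum_nonneg fun i _ => lg_nonneg _
  have hxM : ∀ i, (lpNorm q (x i)) ^ 2 ≤ M :=
    fun i => le_ciSup (f := fun i => (lpNorm q (x i))^2)
      (Set.Finite.bddAbove (Set.finite_range _)) i
  have hwx : ∀ i, lpNorm q (w i) = lpNorm q (x i) := by
    intro i
    have : w i = (-(y i)) • x i := by funext j; simp [hw]
    rw [this, lpNorm_smul q hq]
    rcases hy i with h | h <;> simp [h]
  rw [opNorm]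
  apply Real.sSup_le
  · rintro c ⟨v, hv, rfl⟩
    set s : Fin n → ℝ := fun i =>
      Real.exp (∑ l, w i l * θ₀ l) / (1 + Real.exp (∑ l, w i l * θ₀ l)) ^ 2 with hs
    have hmv : (Matrix.of (fun j k => (1/(n:ℝ)) * ∑ i, s i * (w i j * w i k))).mulVec v
        = ∑ i, ((1/(n:ℝ)) * s i * (∑ k, w i k * v k)) • w i := by
      funext j
      simp only [Matrix.mulVec, dotProduct, Matrix.of_apply, Finset.sum_apply,
        Pi.smul_apply, smul_eq_mul, Finset.sum_mul, Finset.mul_sum]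
      rw [Finset.sum_comm]
      apply Finset.sum_congr rfl
      intro i _
      apply Finset.sum_congr rfl
      intro k _
      ring
    rw [hmv]
    calc lpNorm q (∑ i, ((1/(n:ℝ)) * s i * (∑ k, w i k * v k)) • w i)
        ≤ ∑ i, |(1/(n:ℝ)) * s i * (∑ k, w i k * v k)| * lpNorm q (w i) :=
          lpNorm_sum_smul_le q hq _ _
      _ ≤ ∑ i, (1/(n:ℝ)) * Real.log (1 + Real.exp (∑ l, w i l * θ₀ l)) * M := by
          apply Finset.sum_le_sum
          intro i _
          have hsn : 0 ≤ s i := lg''_nonneg _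
          have hnn : (0:ℝ) ≤ 1/(n:ℝ) := by positivity
          have hdot : |∑ k, w i k * v k| ≤ lpNorm q (w i) * lpNorm p v :=
            holder p q hp hq hpq (w i) v
          have hwn : 0 ≤ lpNorm q (w i) := by
            rw [hwx i]; exact lpNorm_nonneg q hq _
          have h1 : |(1/(n:ℝ)) * s i * (∑ k, w i k * v k)|
              ≤ (1/(n:ℝ)) * s i * (lpNorm q (w i) * lpNorm p v) := by
            rw [abs_mul, abs_mul, abs_of_nonneg hnn, abs_of_nonneg hsn]
            exact mul_le_mul_of_nonneg_left hdot (by positivity)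
          have hvp : 0 ≤ lpNorm p v := lpNorm_nonneg p hp v
          have h2 : |(1/(n:ℝ)) * s i * (∑ k, w i k * v k)| * lpNorm q (w i)
              ≤ ((1/(n:ℝ)) * s i * (lpNorm q (w i) * lpNorm p v)) * lpNorm q (w i) :=
            mul_le_mul_of_nonneg_right h1 hwn
          refine h2.trans ?_
          rw [hwx i]
          have hxn : 0 ≤ lpNorm q (x i) := lpNorm_nonneg q hq _
          have h3 : (1/(n:ℝ)) * s i * (lpNorm q (x i) * lpNorm p v) * lpNorm q (x i)
              ≤ (1/(n:ℝ)) * s i * (lpNorm q (x i))^2 := by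
            have : lpNorm q (x i) * lpNorm p v * lpNorm q (x i)
                ≤ (lpNorm q (x i))^2 := by nlinarith
            calc (1/(n:ℝ)) * s i * (lpNorm q (x i) * lpNorm p v) * lpNorm q (x i)
                = (1/(n:ℝ)) * s i * (lpNorm q (x i) * lpNorm p v * lpNorm q (x i)) := by ring
              _ ≤ (1/(n:ℝ)) * s i * (lpNorm q (x i))^2 :=
                  mul_le_mul_of_nonneg_left this (by positivity)
          refine h3.trans ?_
          have h4 : s i * (lpNorm q (x i))^2
              ≤ Real.log (1 + Real.exp (∑ l, w i l * θ₀ l)) * M := by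
            apply mul_le_mul (lg''_le_lg _) (hxM i) (sq_nonneg _) (lg_nonneg _)
          calc (1/(n:ℝ)) * s i * (lpNorm q (x i))^2
              = (1/(n:ℝ)) * (s i * (lpNorm q (x i))^2) := by ring
            _ ≤ (1/(n:ℝ)) * (Real.log (1 + Real.exp (∑ l, w i l * θ₀ l)) * M) :=
                mul_le_mul_of_nonneg_left h4 (by positivity)
            _ = (1/(n:ℝ)) * Real.log (1 + Real.exp (∑ l, w i l * θ₀ l)) * M := by ring
      _ = M * f θ₀ := by
          rw [hf' θ₀, Finset.mul_sum, Finset.mul_sum]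
          apply Finset.sum_congr rfl
          intro i _
          ring
  · exact mul_nonneg hM_nonneg hf_nonneg
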